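/- arXiv:2603.07916 — 3 statements merged into one kernel-verified Lean document; each statement's English description precedes it below -/
import Mathlib

section
/- For an L-smooth function f bounded below by f*, SGD with unbiased stochastic gradients of variance at most σ² and constant step size η ≤ 1/L satisfies (1/T)∑_{t=0}^{T−1} E‖∇f(x_t)‖² ≤ 2(f(x_0) − f*)/(ηT) + L η σ². -/
open MeasureTheory ProbabilityTheory
section

lemma coord_le_norm {d : ℕ} (x : EuclideanSpace ℝ (Fin d)) (i : Fin d) : |x i| ≤ ‖x‖ := by
  rw [EuclideanSpace.norm_eq, ← Real.sqrt_sq_eq_abs]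
  refine Real.sqrt_le_sqrt ?_
  have := Finset.single_le_sum (f := fun j => ‖x j‖ ^ 2) (fun _ _ => sq_nonneg _)
    (Finset.mem_univ i)
  simpa [Real.norm_eq_abs, sq_abs] using this

lemma sgd_cross {Ω : Type*} {m : MeasurableSpace Ω} [m0 : MeasurableSpace Ω]
    (μ : Measure Ω) [IsProbabilityMeasure μ]
    {d : ℕ} (hm : m ≤ m0)
    {G g : Ω → EuclideanSpace ℝ (Fin d)}
    (hGmeas : Measurable[m] G) (hGL2 : MemLp G 2 μ) (hgL2 : MemLp g 2 μ)
    (hunb : μ[g | m] =ᵐ[μ] G) :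
    ∫ ω, (inner ℝ (G ω) (g ω) : ℝ) ∂μ = ∫ ω, ‖G ω‖ ^ 2 ∂μ := by
  have hintg : Integrable g μ := hgL2.integrable one_le_two
  have hintG : Integrable G μ := hGL2.integrable one_le_two
  have hGm0 : Measurable G := hGmeas.mono hm le_rfl
  have hgm : AEStronglyMeasurable g μ := hintg.aestronglyMeasurable
  set gi : Fin d → Ω → ℝ := fun i ω => g ω i with hgi
  set Gi : Fin d → Ω → ℝ := fun i ω => G ω i with hGi
  have hintgi : ∀ i, Integrable (gi i) μ := fun i =>
    (EuclideanSpace.proj (𝕜 := ℝ) i).integrable_comp hintg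
  have hintGi : ∀ i, Integrable (Gi i) μ := fun i =>
    (EuclideanSpace.proj (𝕜 := ℝ) i).integrable_comp hintG
  have hGimeas : ∀ i, Measurable[m] (Gi i) := fun i => (measurable_pi_apply i).comp ((WithLp.measurable_ofLp ..).comp hGmeas)
  -- conditional expectation of coordinates
  have hcond : ∀ i, (fun ω => Gi i ω) =ᵐ[μ] μ[gi i | m] := by
    intro i
    refine ae_eq_condExp_of_forall_setIntegral_eq hm (hintgi i)
      (fun s _ _ => (hintGi i).integrableOn) (fun s hs hμs => ?_)
      ⟨Gi i, (hGimeas i).stronglyMeasurable, ae_eq_refl _⟩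
    have h1 : ∫ ω in s, Gi i ω ∂μ = (EuclideanSpace.proj (𝕜 := ℝ) i) (∫ ω in s, G ω ∂μ) := by
      simpa using ContinuousLinearMap.integral_comp_comm (EuclideanSpace.proj (𝕜 := ℝ) i)
        (hintG.integrableOn (s := s))
    have h2 : ∫ ω in s, gi i ω ∂μ = (EuclideanSpace.proj (𝕜 := ℝ) i) (∫ ω in s, g ω ∂μ) := by
      simpa using ContinuousLinearMap.integral_comp_comm (EuclideanSpace.proj (𝕜 := ℝ) i)
        (hintg.integrableOn (s := s))
    have h3 : ∫ ω in s, G ω ∂μ = ∫ ω in s, g ω ∂μ := by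
      rw [← setIntegral_condExp hm hintg hs]
      exact setIntegral_congr_ae (hm s hs) (hunb.symm.mono fun ω h _ => h)
    rw [h1, h2, h3]
  -- integrability of products
  have hsq : Integrable (fun ω => ‖G ω‖ ^ 2 + ‖g ω‖ ^ 2) μ :=
    hGL2.norm.integrable_sq.add hgL2.norm.integrable_sq
  have hb : ∀ (F H : Ω → EuclideanSpace ℝ (Fin d)), ∀ i : Fin d,
      ∀ ω, ‖F ω i * H ω i‖ ≤ ‖F ω‖ ^ 2 + ‖H ω‖ ^ 2 := by
    intro F H i ω
    have h1 := coord_le_norm (F ω) i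
    have h2 := coord_le_norm (H ω) i
    have := abs_nonneg (F ω i)
    have := abs_nonneg (H ω i)
    rw [Real.norm_eq_abs, abs_mul]
    nlinarith [mul_le_mul h1 h2 (abs_nonneg (H ω i)) (norm_nonneg (F ω)),
      sq_nonneg (‖F ω‖ - ‖H ω‖), norm_nonneg (F ω), norm_nonneg (H ω)]
  have hbint : ∀ i, Integrable (fun ω => Gi i ω * gi i ω) μ := by
    intro i
    refine Integrable.mono' hsq ?_ (Filter.Eventually.of_forall fun ω => hb G g i ω)
    exact (((measurable_pi_apply i).comp ((WithLp.measurable_ofLp ..).comp hGm0)).aestronglyMeasurable).mul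
      ((EuclideanSpace.proj (𝕜 := ℝ) i).continuous.comp_aestronglyMeasurable hgm)
  have hbint2 : ∀ i, Integrable (fun ω => Gi i ω * Gi i ω) μ := by
    intro i
    refine Integrable.mono' (hGL2.norm.integrable_sq.add hGL2.norm.integrable_sq) ?_
      (Filter.Eventually.of_forall fun ω => hb G G i ω)
    exact (((measurable_pi_apply i).comp ((WithLp.measurable_ofLp ..).comp hGm0)).aestronglyMeasurable).mul
      (((measurable_pi_apply i).comp ((WithLp.measurable_ofLp ..).comp hGm0)).aestronglyMeasurable)
  -- pull-out: ∫ Gi * gi = ∫ Gi * Gi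
  have hkey : ∀ i, ∫ ω, Gi i ω * gi i ω ∂μ = ∫ ω, Gi i ω * Gi i ω ∂μ := by
    intro i
    have hpull : μ[(Gi i) * (gi i) | m] =ᵐ[μ] (Gi i) * μ[gi i | m] :=
      condExp_mul_of_stronglyMeasurable_left (hGimeas i).stronglyMeasurable (hbint i) (hintgi i)
    have heq : (Gi i) * μ[gi i | m] =ᵐ[μ] fun ω => Gi i ω * Gi i ω :=
      (hcond i).symm.mono fun ω h => by simp [Pi.mul_apply, h]
    calc ∫ ω, Gi i ω * gi i ω ∂μ = ∫ ω, ((Gi i) * (gi i)) ω ∂μ := rfl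
      _ = ∫ ω, (μ[(Gi i) * (gi i) | m]) ω ∂μ := (integral_condExp hm).symm
      _ = ∫ ω, Gi i ω * Gi i ω ∂μ := integral_congr_ae (hpull.trans heq)
  -- expand inner ℝ products as sums
  have hinner : ∀ (a b : EuclideanSpace ℝ (Fin d)),
      (inner ℝ a b : ℝ) = ∑ i, a i * b i := by
    intro a b
    simp [PiLp.inner_apply, RCLike.inner_apply, conj_trivial, mul_comm]
  calc ∫ ω, (inner ℝ (G ω) (g ω) : ℝ) ∂μ
      = ∫ ω, ∑ i, Gi i ω * gi i ω ∂μ := by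
        refine integral_congr_ae (Filter.Eventually.of_forall fun ω => ?_)
        exact hinner (G ω) (g ω)
    _ = ∑ i, ∫ ω, Gi i ω * gi i ω ∂μ := integral_finset_sum _ fun i _ => hbint i
    _ = ∑ i, ∫ ω, Gi i ω * Gi i ω ∂μ := by simp_rw [hkey]
    _ = ∫ ω, ∑ i, Gi i ω * Gi i ω ∂μ := (integral_finset_sum _ fun i _ => hbint2 i).symm
    _ = ∫ ω, ‖G ω‖ ^ 2 ∂μ := by
        refine integral_congr_ae (Filter.Eventually.of_forall fun ω => ?_)
        show ∑ i, Gi i ω * Gi i ω = ‖G ω‖ ^ 2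
        rw [← real_inner_self_eq_norm_sq]
        exact (hinner (G ω) (G ω)).symm

lemma sgd_descent {d : ℕ} {L : ℝ} (hL : 0 ≤ L) {f : EuclideanSpace ℝ (Fin d) → ℝ}
    (hf : Differentiable ℝ f)
    (hlip : ∀ x y, ‖gradient f x - gradient f y‖ ≤ L * ‖x - y‖)
    (x v : EuclideanSpace ℝ (Fin d)) :
    f (x + v) ≤ f x + inner ℝ (gradient f x) v + L / 2 * ‖v‖ ^ 2 := by
  have hgc : Continuous (gradient f) := by
    refine (LipschitzWith.of_dist_le_mul (K := L.toNNReal) ?_).continuous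
    intro a b
    simpa [dist_eq_norm, Real.coe_toNNReal L hL] using hlip a b
  have hderiv : ∀ t : ℝ, HasDerivAt (fun s : ℝ => f (x + s • v))
      (inner ℝ (gradient f (x + t • v)) v) t := by
    intro t
    have hline : HasDerivAt (fun s : ℝ => x + s • v) v t := by
      simpa using ((hasDerivAt_id t).smul_const v).const_add x
    have hfd : HasFDerivAt f ((InnerProductSpace.toDual ℝ _) (gradient f (x + t • v)))
        (x + t • v) := (hf _).hasGradientAt
    simpa [Function.comp_def] using hfd.comp_hasDerivAt t hline
  have hcont : Continuous fun t : ℝ => (inner ℝ (gradient f (x + t • v)) v : ℝ) := by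
    exact (hgc.comp (continuous_const.add (continuous_id.smul continuous_const))).inner continuous_const
  have hftc : f (x + v) - f x = ∫ t in (0:ℝ)..1, inner ℝ (gradient f (x + t • v)) v := by
    rw [intervalIntegral.integral_eq_sub_of_hasDerivAt (fun t _ => hderiv t)
      (hcont.intervalIntegrable 0 1)]
    simp
  have hmono : ∫ t in (0:ℝ)..1, (inner ℝ (gradient f (x + t • v)) v : ℝ)
      ≤ ∫ t in (0:ℝ)..1, (inner ℝ (gradient f x) v + L * t * ‖v‖ ^ 2) := by
    have hcont2 : Continuous fun t : ℝ => (inner ℝ (gradient f x) v : ℝ) + L * t * ‖v‖ ^ 2 :=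
      by fun_prop
    apply intervalIntegral.integral_mono_on zero_le_one (hcont.intervalIntegrable 0 1)
      (hcont2.intervalIntegrable 0 1)
    intro t ht
    have h1 : (inner ℝ (gradient f (x + t • v)) v : ℝ) - inner ℝ (gradient f x) v
        = inner ℝ (gradient f (x + t • v) - gradient f x) v := by
      rw [inner_sub_left]
    have h2 : (inner ℝ (gradient f (x + t • v) - gradient f x) v : ℝ)
        ≤ ‖gradient f (x + t • v) - gradient f x‖ * ‖v‖ := real_inner_le_norm _ _
    have h3 : ‖gradient f (x + t • v) - gradient f x‖ ≤ L * (t * ‖v‖) := by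
      have := hlip (x + t • v) x
      simpa [norm_smul, abs_of_nonneg ht.1, mul_assoc] using this
    nlinarith [norm_nonneg v, mul_le_mul_of_nonneg_right h3 (norm_nonneg v)]
  have hval : ∫ t in (0:ℝ)..1, ((inner ℝ (gradient f x) v : ℝ) + L * t * ‖v‖ ^ 2)
      = inner ℝ (gradient f x) v + L / 2 * ‖v‖ ^ 2 := by
    have c2 : Continuous fun t : ℝ => L * t * ‖v‖ ^ 2 := by fun_prop
    rw [intervalIntegral.integral_add (continuous_const.intervalIntegrable 0 1)
      (c2.intervalIntegrable 0 1)]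
    simp [mul_assoc, intervalIntegral.integral_const_mul, integral_id]
    ring
  linarith [hftc, hmono, hval]

set_option maxHeartbeats 1000000 in
/-- SGD on an L-smooth function bounded below: with unbiased stochastic
gradients of conditional variance ≤ σ² and step size η ≤ 1/L,
(1/T)∑ E‖∇f(x_t)‖² ≤ 2(f(x₀) − f*)/(ηT) + Lησ². -/
theorem stmt_4 {Ω : Type*} [m0 : MeasurableSpace Ω] (μ : Measure Ω)
    [IsProbabilityMeasure μ]
    (d : ℕ) (L η σ fstar : ℝ) (hL : 0 < L) (hη : 0 < η) (hηL : η ≤ 1 / L)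
    (hσ : 0 ≤ σ) (T : ℕ) (hT : 0 < T)
    (f : EuclideanSpace ℝ (Fin d) → ℝ) (hf : Differentiable ℝ f)
    (hlip : ∀ x y, ‖gradient f x - gradient f y‖ ≤ L * ‖x - y‖)
    (hlb : ∀ y, fstar ≤ f y)
    (ℱ : ℕ → MeasurableSpace Ω) (hℱ : ∀ t, ℱ t ≤ m0)
    (hmono : ∀ s t, s ≤ t → ℱ s ≤ ℱ t)
    (x g : ℕ → Ω → EuclideanSpace ℝ (Fin d))
    (x0 : EuclideanSpace ℝ (Fin d)) (hx0 : ∀ ω, x 0 ω = x0)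
    (hupdate : ∀ t ω, x (t + 1) ω = x t ω - η • g t ω)
    (hadapted : ∀ t, Measurable[ℱ t] (x t))
    (hmeas : ∀ t, Measurable[ℱ (t + 1)] (g t))
    (hL2 : ∀ t, MemLp (g t) 2 μ)
    (hunbiased : ∀ t, μ[g t | ℱ t] =ᵐ[μ] fun ω => gradient f (x t ω))
    (hvar : ∀ t, ∀ᵐ ω ∂μ,
      (μ[fun ω' => ‖g t ω' - gradient f (x t ω')‖ ^ 2 | ℱ t]) ω ≤ σ ^ 2) :
    (T : ℝ)⁻¹ * ∑ t ∈ Finset.range T, ∫ ω, ‖gradient f (x t ω)‖ ^ 2 ∂μ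
      ≤ 2 * (f x0 - fstar) / (η * T) + L * η * σ ^ 2 := by
  have hgc : Continuous (gradient f) := by
    refine (LipschitzWith.of_dist_le_mul (K := L.toNNReal) ?_).continuous
    intro a b
    simpa [dist_eq_norm, Real.coe_toNNReal L hL.le] using hlip a b
  set G : ℕ → Ω → EuclideanSpace ℝ (Fin d) := fun t ω => gradient f (x t ω) with hGdef
  have hxL2 : ∀ t, MemLp (x t) 2 μ := by
    intro t; induction t with
    | zero =>
      have h : x 0 = fun _ => x0 := funext hx0
      rw [h]; exact memLp_const x0
    | succ t ih =>
      have h : x (t + 1) = fun ω => x t ω - η • g t ω := funext (hupdate t)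
      rw [h]; exact ih.sub ((hL2 t).const_smul η)
  have hGmeas : ∀ t, Measurable[ℱ t] (G t) := fun t => hgc.measurable.comp (hadapted t)
  have hxmeas : ∀ t, Measurable (x t) := fun t => (hadapted t).mono (hℱ t) le_rfl
  have hGL2 : ∀ t, MemLp (G t) 2 μ := by
    intro t
    refine MemLp.of_le ((memLp_const ‖gradient f 0‖).add ((hxL2 t).norm.const_mul L)) ?_ ?_
    · exact (hgc.measurable.comp (hxmeas t)).aestronglyMeasurable
    · refine Filter.Eventually.of_forall fun ω => ?_
      have h := hlip (x t ω) 0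
      have h2 : ‖G t ω‖ - ‖gradient f 0‖ ≤ ‖G t ω - gradient f 0‖ := norm_sub_norm_le _ _
      simp only [sub_zero] at h
      have h3 : ‖G t ω‖ ≤ ‖gradient f 0‖ + L * ‖x t ω‖ := by
        simp only [hGdef] at h2 ⊢; linarith
      refine h3.trans ?_
      rw [Real.norm_eq_abs]
      exact le_abs_self _
  have heL2 : ∀ t, MemLp (fun ω => g t ω - G t ω) 2 μ := fun t => (hL2 t).sub (hGL2 t)
  have intG2 : ∀ t, Integrable (fun ω => ‖G t ω‖ ^ 2) μ := fun t => (hGL2 t).norm.integrable_sq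
  have intg2 : ∀ t, Integrable (fun ω => ‖g t ω‖ ^ 2) μ := fun t => (hL2 t).norm.integrable_sq
  have inte2 : ∀ t, Integrable (fun ω => ‖g t ω - G t ω‖ ^ 2) μ :=
    fun t => (heL2 t).norm.integrable_sq
  have intInner : ∀ t, Integrable (fun ω => (inner ℝ (G t ω) (g t ω) : ℝ)) μ := by
    intro t
    have hsq : Integrable (fun ω => ‖G t ω‖ ^ 2 + ‖g t ω‖ ^ 2) μ := (intG2 t).add (intg2 t)
    refine Integrable.mono' hsq
      (((hGL2 t).aestronglyMeasurable).inner ((hL2 t).aestronglyMeasurable))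
      (Filter.Eventually.of_forall fun ω => ?_)
    have h1 := norm_inner_le_norm (𝕜 := ℝ) (G t ω) (g t ω)
    nlinarith [norm_nonneg (G t ω), norm_nonneg (g t ω), sq_nonneg (‖G t ω‖ - ‖g t ω‖)]
  have hcross : ∀ t, ∫ ω, (inner ℝ (G t ω) (g t ω) : ℝ) ∂μ = ∫ ω, ‖G t ω‖ ^ 2 ∂μ :=
    fun t => sgd_cross μ (hℱ t) (hGmeas t) (hGL2 t) (hL2 t) (hunbiased t)
  have hvar' : ∀ t, ∫ ω, ‖g t ω - G t ω‖ ^ 2 ∂μ ≤ σ ^ 2 := by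
    intro t
    have h1 : ∫ ω, ‖g t ω - G t ω‖ ^ 2 ∂μ
        = ∫ ω, (μ[fun ω' => ‖g t ω' - gradient f (x t ω')‖ ^ 2 | ℱ t]) ω ∂μ :=
      (integral_condExp (hℱ t)).symm
    rw [h1]
    calc ∫ ω, (μ[fun ω' => ‖g t ω' - gradient f (x t ω')‖ ^ 2 | ℱ t]) ω ∂μ
        ≤ ∫ _ω, σ ^ 2 ∂μ :=
          integral_mono_ae integrable_condExp (integrable_const _) (hvar t)
      _ = σ ^ 2 := by simp
  have hg2 : ∀ t, ∫ ω, ‖g t ω‖ ^ 2 ∂μ ≤ ∫ ω, ‖G t ω‖ ^ 2 ∂μ + σ ^ 2 := by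
    intro t
    have hptw : (fun ω => ‖g t ω‖ ^ 2) = fun ω =>
        (‖G t ω‖ ^ 2 + ‖g t ω - G t ω‖ ^ 2) +
          (2 * (inner ℝ (G t ω) (g t ω) : ℝ) - 2 * ‖G t ω‖ ^ 2) := by
      funext ω
      have hsum : g t ω = G t ω + (g t ω - G t ω) := by abel
      have h := norm_add_sq_real (G t ω) (g t ω - G t ω)
      rw [← hsum] at h
      have h2 : (inner ℝ (G t ω) (g t ω - G t ω) : ℝ)
          = inner ℝ (G t ω) (g t ω) - ‖G t ω‖ ^ 2 := by
        rw [inner_sub_right, real_inner_self_eq_norm_sq]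
      rw [h, h2]; ring
    have iA : Integrable (fun ω => ‖G t ω‖ ^ 2 + ‖g t ω - G t ω‖ ^ 2) μ :=
      (intG2 t).add (inte2 t)
    have i1 : Integrable (fun ω => 2 * (inner ℝ (G t ω) (g t ω) : ℝ)) μ :=
      (intInner t).const_mul 2
    have i2 : Integrable (fun ω => 2 * ‖G t ω‖ ^ 2) μ := (intG2 t).const_mul 2
    have iB : Integrable (fun ω =>
        2 * (inner ℝ (G t ω) (g t ω) : ℝ) - 2 * ‖G t ω‖ ^ 2) μ := i1.sub i2
    rw [hptw, integral_add iA iB, integral_add (intG2 t) (inte2 t),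
      integral_sub i1 i2, integral_const_mul, integral_const_mul, hcross t]
    linarith [hvar' t]
  have hfub : ∀ y, f y ≤ f 0 + ‖gradient f 0‖ * ‖y‖ + L / 2 * ‖y‖ ^ 2 := by
    intro y
    have h := sgd_descent hL.le hf hlip 0 y
    rw [zero_add] at h
    have h2 := real_inner_le_norm (gradient f 0) y
    linarith
  have intf : ∀ t, Integrable (fun ω => f (x t ω)) μ := by
    intro t
    have i1 : Integrable (fun ω => ‖x t ω‖) μ := (hxL2 t).norm.integrable one_le_two
    have i2 : Integrable (fun ω => ‖x t ω‖ ^ 2) μ := (hxL2 t).norm.integrable_sq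
    have iA : Integrable (fun ω => |fstar| + |f 0| + ‖gradient f 0‖ * ‖x t ω‖) μ :=
      (integrable_const _).add (i1.const_mul _)
    have iB : Integrable (fun ω =>
        |fstar| + |f 0| + ‖gradient f 0‖ * ‖x t ω‖ + L / 2 * ‖x t ω‖ ^ 2) μ :=
      iA.add (i2.const_mul _)
    refine iB.mono' ((hf.continuous.measurable.comp (hxmeas t)).aestronglyMeasurable)
      (Filter.Eventually.of_forall fun ω => ?_)
    rw [Real.norm_eq_abs, abs_le]
    constructor
    · have h1 := hlb (x t ω)
      have h2 : (0:ℝ) ≤ ‖gradient f 0‖ * ‖x t ω‖ :=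
        mul_nonneg (norm_nonneg _) (norm_nonneg _)
      have h3 : (0:ℝ) ≤ L / 2 * ‖x t ω‖ ^ 2 := by positivity
      have := neg_abs_le fstar
      have := abs_nonneg (f 0)
      linarith
    · have h1 := hfub (x t ω)
      have := le_abs_self (f 0)
      have := abs_nonneg fstar
      linarith
  have step : ∀ t, ∫ ω, f (x (t + 1) ω) ∂μ
      ≤ ∫ ω, f (x t ω) ∂μ - η / 2 * ∫ ω, ‖G t ω‖ ^ 2 ∂μ + L * η ^ 2 / 2 * σ ^ 2 := by
    intro t
    have hptw : ∀ ω, f (x (t + 1) ω) ≤ f (x t ω) - η * (inner ℝ (G t ω) (g t ω) : ℝ)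
        + L * η ^ 2 / 2 * ‖g t ω‖ ^ 2 := by
      intro ω
      have h1 : x (t + 1) ω = x t ω + (-(η • g t ω)) := by
        rw [hupdate]; abel
      have hd := sgd_descent hL.le hf hlip (x t ω) (-(η • g t ω))
      rw [← h1] at hd
      have e1 : (inner ℝ (G t ω) (-(η • g t ω)) : ℝ)
          = -(η * inner ℝ (G t ω) (g t ω)) := by
        rw [inner_neg_right, real_inner_smul_right]
      have e2 : ‖-(η • g t ω)‖ ^ 2 = η ^ 2 * ‖g t ω‖ ^ 2 := by
        rw [norm_neg, norm_smul, mul_pow, Real.norm_eq_abs, sq_abs]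
      rw [e1, e2] at hd
      have hLnn := hL.le
      nlinarith [hd]
    have i1 : Integrable (fun ω => η * (inner ℝ (G t ω) (g t ω) : ℝ)) μ :=
      (intInner t).const_mul η
    have i2 : Integrable (fun ω => L * η ^ 2 / 2 * ‖g t ω‖ ^ 2) μ :=
      (intg2 t).const_mul _
    have iA : Integrable (fun ω => f (x t ω) - η * (inner ℝ (G t ω) (g t ω) : ℝ)) μ :=
      (intf t).sub i1
    have hint1 : Integrable (fun ω => f (x t ω) - η * (inner ℝ (G t ω) (g t ω) : ℝ)
        + L * η ^ 2 / 2 * ‖g t ω‖ ^ 2) μ := iA.add i2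
    have h2 := integral_mono (intf (t + 1)) hint1 hptw
    rw [integral_add iA i2, integral_sub (intf t) i1,
      integral_const_mul, integral_const_mul, hcross t] at h2
    have h3 := hg2 t
    have h4 : (0:ℝ) ≤ ∫ ω, ‖G t ω‖ ^ 2 ∂μ := integral_nonneg fun ω => sq_nonneg _
    have h5 : L * η ≤ 1 := by
      rw [le_div_iff₀ hL] at hηL; linarith
    nlinarith [h2, mul_le_mul_of_nonneg_left h3 (show (0:ℝ) ≤ L * η ^ 2 / 2 by positivity),
      mul_le_mul_of_nonneg_right h5 (mul_nonneg hη.le h4)]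
  have tele : ∀ n : ℕ, ∫ ω, f (x n ω) ∂μ
      + ∑ t ∈ Finset.range n, η / 2 * ∫ ω, ‖G t ω‖ ^ 2 ∂μ
      ≤ ∫ ω, f (x 0 ω) ∂μ + n * (L * η ^ 2 / 2 * σ ^ 2) := by
    intro n; induction n with
    | zero => simp
    | succ n ih =>
      rw [Finset.sum_range_succ]
      push_cast
      linarith [step n]
  have hlow : fstar ≤ ∫ ω, f (x T ω) ∂μ := by
    have : (fstar : ℝ) = ∫ _ω, fstar ∂μ := by simp
    rw [this]
    exact integral_mono_ae (integrable_const _) (intf T)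
      (Filter.Eventually.of_forall fun ω => hlb _)
  have hx00 : ∫ ω, f (x 0 ω) ∂μ = f x0 := by
    simp only [hx0]; simp
  have hTpos : (0:ℝ) < T := by exact_mod_cast hT
  have hS := tele T
  rw [hx00, ← Finset.mul_sum] at hS
  set S := ∑ t ∈ Finset.range T, ∫ ω, ‖G t ω‖ ^ 2 ∂μ with hSdef
  have hSle : η / 2 * S ≤ (f x0 - fstar) + T * (L * η ^ 2 / 2 * σ ^ 2) := by linarith
  have hkey : (T : ℝ) * (2 * (f x0 - fstar) / (η * T) + L * η * σ ^ 2)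
      = 2 * (f x0 - fstar) / η + T * (L * η * σ ^ 2) := by
    field_simp
  rw [inv_mul_le_iff₀ hTpos, hkey]
  have h7 : η * S ≤ 2 * (f x0 - fstar) + T * (L * η ^ 2 * σ ^ 2) := by nlinarith [hSle]
  have h8 : 2 * (f x0 - fstar) / η + (T : ℝ) * (L * η * σ ^ 2)
      = (2 * (f x0 - fstar) + T * (L * η ^ 2 * σ ^ 2)) / η := by
    field_simp
  rw [h8, le_div_iff₀ hη]
  nlinarith [h7]
end
end

section
/- If f is convex and L-smooth, then the gradient is cocoercive: ⟨∇f(x) − ∇f(y), x − y⟩ ≥ (1/L)‖∇f(x) − ∇f(y)‖² for all x, y. -/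
open RealInnerProductSpace

variable {d : ℕ}

lemma aux_line (f : EuclideanSpace ℝ (Fin d) → ℝ) (hf : Differentiable ℝ f)
    (x y : EuclideanSpace ℝ (Fin d)) (t : ℝ) :
    HasDerivAt (fun t : ℝ => f (x + t • (y - x)))
      ⟪gradient f (x + t • (y - x)), y - x⟫ t := by
  have h1 : HasDerivAt (fun t : ℝ => x + t • (y - x)) (y - x) t := by
    simpa using ((hasDerivAt_id t).smul_const (y - x)).const_add x
  have h2 := (hf (x + t • (y - x))).hasGradientAt.hasFDerivAt.comp_hasDerivAt t h1
  simpa [InnerProductSpace.toDual_apply_apply, real_inner_comm, Function.comp_def] using h2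

lemma aux_conv (f : EuclideanSpace ℝ (Fin d) → ℝ) (hf : Differentiable ℝ f)
    (hconv : ConvexOn ℝ Set.univ f) (x y : EuclideanSpace ℝ (Fin d)) :
    f x + ⟪gradient f x, y - x⟫ ≤ f y := by
  set g : ℝ → ℝ := fun t => f (x + t • (y - x)) with hg
  have gconv : ConvexOn ℝ Set.univ g := by
    have h := hconv.comp_affineMap (AffineMap.lineMap x y)
    have he : g = f ∘ (AffineMap.lineMap x y) := by
      funext t
      simp [hg, AffineMap.lineMap_apply, add_comm]
    rw [he, ← Set.preimage_univ (f := (AffineMap.lineMap x y : ℝ →ᵃ[ℝ] EuclideanSpace ℝ (Fin d)))]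
    exact h
  have gd : HasDerivAt g ⟪gradient f x, y - x⟫ 0 := by
    have := aux_line f hf x y 0
    simpa using this
  have hs := gconv.le_slope_of_hasDerivAt (Set.mem_univ 0) (Set.mem_univ 1)
    one_pos gd
  have h0 : g 0 = f x := by simp [hg]
  have h1 : g 1 = f y := by simp [hg]
  rw [slope_def_field, h0, h1] at hs
  rw [show (1:ℝ) - 0 = 1 from by norm_num, div_one] at hs
  linarith [hs]

lemma aux_descent (L : ℝ) (hL : 0 < L) (f : EuclideanSpace ℝ (Fin d) → ℝ)
    (hf : Differentiable ℝ f)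
    (hlip : ∀ x y, ‖gradient f x - gradient f y‖ ≤ L * ‖x - y‖)
    (x y : EuclideanSpace ℝ (Fin d)) :
    f y ≤ f x + ⟪gradient f x, y - x⟫ + L / 2 * ‖y - x‖ ^ 2 := by
  have hgc : Continuous (gradient f) := by
    refine (LipschitzWith.of_dist_le_mul (K := ⟨L, hL.le⟩) ?_).continuous
    intro a b
    rw [dist_eq_norm, dist_eq_norm]; exact hlip a b
  set g' : ℝ → ℝ := fun t => ⟪gradient f (x + t • (y - x)), y - x⟫ with hg'
  have hcont : Continuous g' := by
    apply Continuous.inner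
    · exact hgc.comp (by continuity)
    · exact continuous_const
  have hint : f y - f x = ∫ t in (0:ℝ)..1, g' t := by
    have h := intervalIntegral.integral_eq_sub_of_hasDerivAt
      (f := fun t : ℝ => f (x + t • (y - x))) (f' := g')
      (fun t ht => aux_line f hf x y t)
      (hcont.intervalIntegrable 0 1)
    rw [h]
    norm_num
  have hbound : ∀ t ∈ Set.Icc (0:ℝ) 1,
      g' t ≤ ⟪gradient f x, y - x⟫ + (L * ‖y - x‖ ^ 2) * t := by
    intro t ht
    have h1 : g' t - ⟪gradient f x, y - x⟫
        = ⟪gradient f (x + t • (y - x)) - gradient f x, y - x⟫ := by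
      rw [inner_sub_left]
    have h2 : ⟪gradient f (x + t • (y - x)) - gradient f x, y - x⟫
        ≤ ‖gradient f (x + t • (y - x)) - gradient f x‖ * ‖y - x‖ :=
      real_inner_le_norm _ _
    have h3 : ‖gradient f (x + t • (y - x)) - gradient f x‖ ≤ L * (t * ‖y - x‖) := by
      have := hlip (x + t • (y - x)) x
      simpa [norm_smul, abs_of_nonneg ht.1] using this
    nlinarith [norm_nonneg (y - x), ht.1, hL.le]
  have hmono : (∫ t in (0:ℝ)..1, g' t)
      ≤ ∫ t in (0:ℝ)..1, (⟪gradient f x, y - x⟫ + (L * ‖y - x‖ ^ 2) * t) := by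
    apply intervalIntegral.integral_mono_on (by norm_num)
      (hcont.intervalIntegrable 0 1)
      ((by continuity : Continuous fun t : ℝ =>
        (⟪gradient f x, y - x⟫ + (L * ‖y - x‖ ^ 2) * t)).intervalIntegrable 0 1)
    exact hbound
  have hval : (∫ t in (0:ℝ)..1, (⟪gradient f x, y - x⟫ + (L * ‖y - x‖ ^ 2) * t))
      = ⟪gradient f x, y - x⟫ + L / 2 * ‖y - x‖ ^ 2 := by
    rw [intervalIntegral.integral_add (g := fun t : ℝ => (L * ‖y - x‖ ^ 2) * t) (intervalIntegrable_const)
      (((continuous_const.mul continuous_id') :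
        Continuous fun t : ℝ => (L * ‖y - x‖ ^ 2) * t).intervalIntegrable 0 1),
      intervalIntegral.integral_const_mul, integral_id]
    simp
    ring
  rw [hval] at hmono
  linarith [hint ▸ hmono]

lemma aux_key (L : ℝ) (hL : 0 < L) (f : EuclideanSpace ℝ (Fin d) → ℝ)
    (hf : Differentiable ℝ f) (hconv : ConvexOn ℝ Set.univ f)
    (hlip : ∀ x y, ‖gradient f x - gradient f y‖ ≤ L * ‖x - y‖)
    (x y : EuclideanSpace ℝ (Fin d)) :
    f x + ⟪gradient f x, y - x⟫ + 1 / (2 * L) * ‖gradient f y - gradient f x‖ ^ 2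
      ≤ f y := by
  set c : ℝ := 1 / L with hc
  have hc0 : 0 < c := by positivity
  have hcL : c * L = 1 := by rw [hc]; field_simp
  set g : EuclideanSpace ℝ (Fin d) := gradient f y - gradient f x with hgdef
  set z : EuclideanSpace ℝ (Fin d) := y - c • g with hz
  have hB := aux_conv f hf hconv x z
  have hA := aux_descent L hL f hf hlip y z
  have e1 : ⟪gradient f y, z - y⟫ = -(c * ⟪gradient f y, g⟫) := by
    have : z - y = -(c • g) := by rw [hz]; abel
    rw [this, inner_neg_right, real_inner_smul_right]
  have e2 : ‖z - y‖ ^ 2 = c ^ 2 * ‖g‖ ^ 2 := by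
    have : z - y = -(c • g) := by rw [hz]; abel
    rw [this, norm_neg, norm_smul]
    rw [Real.norm_eq_abs, abs_of_pos hc0]
    ring
  have e3 : ⟪gradient f x, z - x⟫ = ⟪gradient f x, y - x⟫ - c * ⟪gradient f x, g⟫ := by
    have : z - x = (y - x) - c • g := by rw [hz]; abel
    rw [this, inner_sub_right, real_inner_smul_right]
  have e4 : ⟪gradient f y, g⟫ - ⟪gradient f x, g⟫ = ‖g‖ ^ 2 := by
    rw [← inner_sub_left, ← hgdef, real_inner_self_eq_norm_sq]
  have e5 : L / 2 * (c ^ 2 * ‖g‖ ^ 2) = c / 2 * ‖g‖ ^ 2 := by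
    have h : L / 2 * (c ^ 2 * ‖g‖ ^ 2) = (c * L) * (c / 2 * ‖g‖ ^ 2) := by ring
    rw [h, hcL, one_mul]
  have e6 : 1 / (2 * L) * ‖g‖ ^ 2 = c / 2 * ‖g‖ ^ 2 := by
    rw [hc]; ring
  rw [e1, e2, e5] at hA
  rw [e3] at hB
  rw [e6]
  nlinarith [hA, hB, e4, hc0]

/-- Cocoercivity of the gradient of a convex L-smooth function. -/
theorem stmt_12 (d : ℕ) (L : ℝ) (hL : 0 < L)
    (f : EuclideanSpace ℝ (Fin d) → ℝ) (hf : Differentiable ℝ f)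
    (hconv : ConvexOn ℝ Set.univ f)
    (hlip : ∀ x y, ‖gradient f x - gradient f y‖ ≤ L * ‖x - y‖) :
    ∀ x y, ⟪gradient f x - gradient f y, x - y⟫ ≥
      (1 / L) * ‖gradient f x - gradient f y‖ ^ 2 := by
  intro x y
  have k1 := aux_key L hL f hf hconv hlip x y
  have k2 := aux_key L hL f hf hconv hlip y x
  have hn : ‖gradient f y - gradient f x‖ = ‖gradient f x - gradient f y‖ :=
    norm_sub_rev _ _
  have hi : ⟪gradient f x - gradient f y, x - y⟫
      = ⟪gradient f x, x - y⟫ - ⟪gradient f y, x - y⟫ := inner_sub_left _ _ _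
  have hi2 : ⟪gradient f x, x - y⟫ = -⟪gradient f x, y - x⟫ := by
    rw [← inner_neg_right]; congr 1; abel
  rw [hn] at k1
  rw [hi, hi2]
  have h2 : 1 / L = 2 * (1 / (2 * L)) := by
    field_simp
  rw [h2]
  linarith [k1, k2]
end

section
/- For a smooth function f with minimizer x*, if each f_i is convex and L-smooth and f = (1/N)∑ f_i, then (1/N)∑_{i=1}^N ‖∇f_i(x) − ∇f_i(x*)‖² ≤ 2L(f(x) − f(x*)) for all x. -/
open Set intervalIntegral
open scoped RealInnerProductSpace

variable {E : Type*} [NormedAddCommGroup E] [InnerProductSpace ℝ E] [CompleteSpace E]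

lemma line_hasDerivAt {f : E → ℝ} {gz : E} (x v : E) (t : ℝ)
    (hf : HasGradientAt f gz (x + t • v)) :
    HasDerivAt (fun s : ℝ => f (x + s • v)) ⟪gz, v⟫ t := by
  have hline : HasDerivAt (fun s : ℝ => x + s • v) v t := by
    simpa using ((hasDerivAt_id t).smul_const v).const_add x
  have hfd : HasFDerivAt f (InnerProductSpace.toDual ℝ E gz) (x + t • v) :=
    (hasGradientAt_iff_hasFDerivAt).mp hf
  have := hfd.comp_hasDerivAt t hline
  simpa [InnerProductSpace.toDual_apply_apply, Function.comp_def] using this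

lemma descent {f : E → ℝ} {g : E → E} {L : ℝ} (hL : 0 < L)
    (hg : ∀ z, HasGradientAt f (g z) z)
    (hlip : ∀ a b, ‖g a - g b‖ ≤ L * ‖a - b‖) (x y : E) :
    f y ≤ f x + ⟪g x, y - x⟫ + L / 2 * ‖y - x‖ ^ 2 := by
  set v := y - x with hv
  have hgcont : Continuous g := by
    have : LipschitzWith (Real.toNNReal L) g := by
      intro a b
      rw [edist_dist, edist_dist, dist_eq_norm, dist_eq_norm]
      have h1 := hlip a b
      have : dist (g a) (g b) ≤ L * dist a b := by
        simpa [dist_eq_norm] using h1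
      calc ENNReal.ofReal (‖g a - g b‖) ≤ ENNReal.ofReal (L * ‖a - b‖) := by
            exact ENNReal.ofReal_le_ofReal h1
        _ = ENNReal.ofReal L * ENNReal.ofReal ‖a - b‖ := by
            rw [ENNReal.ofReal_mul hL.le]
        _ = (Real.toNNReal L : ENNReal) * ENNReal.ofReal ‖a - b‖ := by
            simp [ENNReal.ofReal]
    exact this.continuous
  have hcont : Continuous fun t : ℝ => ⟪g (x + t • v), v⟫ := by
    exact (Continuous.inner (hgcont.comp (by continuity)) continuous_const)
  have hInt : f y - f x = ∫ t in (0:ℝ)..1, ⟪g (x + t • v), v⟫ := by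
    have := intervalIntegral.integral_eq_sub_of_hasDerivAt
      (f := fun s : ℝ => f (x + s • v)) (f' := fun t : ℝ => ⟪g (x + t • v), v⟫)
      (a := 0) (b := 1)
      (fun t _ => line_hasDerivAt x v t (hg _))
      (hcont.intervalIntegrable 0 1)
    rw [this]
    simp [hv]
  have key : ∫ t in (0:ℝ)..1, (⟪g (x + t • v), v⟫ - ⟪g x, v⟫)
      ≤ ∫ t in (0:ℝ)..1, (L * ‖v‖ ^ 2) * t := by
    apply intervalIntegral.integral_mono_on (by norm_num)
    · exact ((hcont.sub continuous_const).intervalIntegrable 0 1)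
    · exact ((continuous_const.mul continuous_id).intervalIntegrable 0 1)
    · intro t ht
      rcases ht with ⟨ht0, ht1⟩
      have h1 : ⟪g (x + t • v), v⟫ - ⟪g x, v⟫ = ⟪g (x + t • v) - g x, v⟫ := by
        rw [inner_sub_left]
      rw [h1]
      calc ⟪g (x + t • v) - g x, v⟫ ≤ ‖g (x + t • v) - g x‖ * ‖v‖ := real_inner_le_norm _ _
        _ ≤ (L * ‖x + t • v - x‖) * ‖v‖ := by
            apply mul_le_mul_of_nonneg_right (hlip _ _) (norm_nonneg _)
        _ = (L * ‖v‖ ^ 2) * t := by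
            simp [norm_smul, abs_of_nonneg ht0]
            ring
  have hval : ∫ t in (0:ℝ)..1, (L * ‖v‖ ^ 2) * t = L / 2 * ‖v‖ ^ 2 := by
    rw [intervalIntegral.integral_const_mul, integral_id]
    ring
  have hsplit : ∫ t in (0:ℝ)..1, (⟪g (x + t • v), v⟫ - ⟪g x, v⟫)
      = (f y - f x) - ⟪g x, v⟫ := by
    rw [intervalIntegral.integral_sub (hcont.intervalIntegrable 0 1)
      (intervalIntegrable_const), ← hInt]
    simp
  rw [hsplit, hval] at key
  linarith

lemma convex_grad_ineq {f : E → ℝ} {gy : E} (hconv : ConvexOn ℝ univ f)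
    (x y : E) (hg : HasGradientAt f gy y) :
    f y + ⟪gy, x - y⟫ ≤ f x := by
  set φ : ℝ → ℝ := fun t => f (y + t • (x - y)) with hφ
  have hder : HasDerivAt φ ⟪gy, x - y⟫ 0 := by
    have := line_hasDerivAt (f := f) y (x - y) 0 (by simpa using hg)
    exact this
  have hconvφ : ConvexOn ℝ univ φ := by
    have := hconv.comp_affineMap (AffineMap.lineMap y x : ℝ →ᵃ[ℝ] E)
    have heq : (f ∘ (AffineMap.lineMap y x : ℝ →ᵃ[ℝ] E)) = φ := by
      funext t
      simp only [Function.comp_apply, AffineMap.lineMap_apply, φ, vsub_eq_sub, vadd_eq_add]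
      rw [add_comm]
    rw [heq] at this
    simpa using this
  have hslope := hconvφ.deriv_le_slope (mem_univ (0:ℝ)) (mem_univ (1:ℝ)) one_pos
    hder.differentiableAt
  rw [hder.deriv] at hslope
  have : slope φ 0 1 = f x - f y := by
    simp [slope, φ]
  rw [this] at hslope
  linarith

lemma cocoercive {f : E → ℝ} {g : E → E} {L : ℝ} (hL : 0 < L)
    (hconv : ConvexOn ℝ univ f)
    (hg : ∀ z, HasGradientAt f (g z) z)
    (hlip : ∀ a b, ‖g a - g b‖ ≤ L * ‖a - b‖) (x y : E) :
    ‖g x - g y‖ ^ 2 ≤ 2 * L * (f x - f y - ⟪g y, x - y⟫) := by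
  set F : E → ℝ := fun w => f w - ⟪g y, w⟫ with hF
  set G : E → E := fun w => g w - g y with hG
  have hgF : ∀ z, HasGradientAt F (G z) z := by
    intro z
    have h1 : HasGradientAt (fun w => ⟪g y, w⟫) (g y) z := by
      rw [hasGradientAt_iff_hasFDerivAt]
      have := (InnerProductSpace.toDual ℝ E (g y)).hasFDerivAt (x := z)
      exact this
    have h1' := (hasGradientAt_iff_hasFDerivAt).mp h1
    have h2 := ((hasGradientAt_iff_hasFDerivAt).mp (hg z)).sub h1'
    rw [hasGradientAt_iff_hasFDerivAt]
    simp only [hG, map_sub]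
    exact h2
  have hlipF : ∀ a b, ‖G a - G b‖ ≤ L * ‖a - b‖ := by
    intro a b
    simpa [hG, sub_sub_sub_cancel_right] using hlip a b
  have hconvF : ConvexOn ℝ univ F := by
    apply hconv.sub
    refine ⟨convex_univ, ?_⟩
    intro a _ b _ s t hs ht hst
    simp [inner_add_right, inner_smul_right]
  -- F y ≤ F w for all w, since G y = 0
  have hGy : G y = 0 := by simp [hG]
  have hmin : ∀ w, F y ≤ F w := by
    intro w
    have := convex_grad_ineq hconvF w y (hgF y)
    rw [hGy] at this
    simpa using this
  set w : E := x - L⁻¹ • (G x) with hw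
  have hd := descent hL hgF hlipF x w
  have h1 : ⟪G x, w - x⟫ = -(L⁻¹ * ‖G x‖ ^ 2) := by
    simp [hw, inner_smul_right, real_inner_self_eq_norm_sq]
  have h2 : ‖w - x‖ ^ 2 = L⁻¹ ^ 2 * ‖G x‖ ^ 2 := by
    simp [hw, norm_smul, abs_inv, abs_of_pos hL]
    ring
  rw [h1, h2] at hd
  have h3 : F y ≤ F x - L⁻¹ / 2 * ‖G x‖ ^ 2 := by
    have := hmin w
    have hL' : L ≠ 0 := hL.ne'
    have : F y ≤ F x + -(L⁻¹ * ‖G x‖ ^ 2) + L / 2 * (L⁻¹ ^ 2 * ‖G x‖ ^ 2) :=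
      le_trans this hd
    have heq : F x + -(L⁻¹ * ‖G x‖ ^ 2) + L / 2 * (L⁻¹ ^ 2 * ‖G x‖ ^ 2)
        = F x - L⁻¹ / 2 * ‖G x‖ ^ 2 := by
      field_simp
      ring
    linarith [heq ▸ this]
  have hFxy : F x - F y = f x - f y - ⟪g y, x - y⟫ := by
    simp [hF, inner_sub_right]
    ring
  have hL' : (0:ℝ) < L⁻¹ := inv_pos.mpr hL
  have : L⁻¹ / 2 * ‖G x‖ ^ 2 ≤ F x - F y := by linarith
  calc ‖g x - g y‖ ^ 2 = 2 * L * (L⁻¹ / 2 * ‖G x‖ ^ 2) := by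
        field_simp [hG]
        ring
    _ ≤ 2 * L * (F x - F y) := by
        apply mul_le_mul_of_nonneg_left this (by positivity)
    _ = 2 * L * (f x - f y - ⟪g y, x - y⟫) := by rw [hFxy]

/-- Variance transfer: for f = (1/N)∑ fᵢ with each fᵢ convex L-smooth and
x* a minimizer of f, (1/N)∑‖∇fᵢ(x) − ∇fᵢ(x*)‖² ≤ 2L(f(x) − f(x*)). -/
theorem stmt_13 (d N : ℕ) (hN : 0 < N) (L : ℝ) (hL : 0 < L)
    (f : Fin N → EuclideanSpace ℝ (Fin d) → ℝ)
    (hdiff : ∀ i, Differentiable ℝ (f i))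
    (hconv : ∀ i, ConvexOn ℝ Set.univ (f i))
    (hlip : ∀ i x y, ‖gradient (f i) x - gradient (f i) y‖ ≤ L * ‖x - y‖)
    (xstar : EuclideanSpace ℝ (Fin d))
    (hstar : ∀ y, (N : ℝ)⁻¹ * ∑ i, f i xstar ≤ (N : ℝ)⁻¹ * ∑ i, f i y) :
    ∀ x, (N : ℝ)⁻¹ * ∑ i, ‖gradient (f i) x - gradient (f i) xstar‖ ^ 2
      ≤ 2 * L * ((N : ℝ)⁻¹ * ∑ i, f i x - (N : ℝ)⁻¹ * ∑ i, f i xstar) := by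
  intro x
  have hg : ∀ i (z : EuclideanSpace ℝ (Fin d)), HasGradientAt (f i) (gradient (f i) z) z :=
    fun i z => ((hdiff i) z).hasGradientAt
  -- gradient of the average at xstar is zero
  have hsumF : HasFDerivAt (fun w : EuclideanSpace ℝ (Fin d) => (N : ℝ)⁻¹ * ∑ i, f i w)
      ((N : ℝ)⁻¹ • ∑ i, InnerProductSpace.toDual ℝ (EuclideanSpace ℝ (Fin d)) (gradient (f i) xstar)) xstar := by
    have hsum : HasFDerivAt (fun w : EuclideanSpace ℝ (Fin d) => ∑ i, f i w)
        (∑ i, InnerProductSpace.toDual ℝ (EuclideanSpace ℝ (Fin d)) (gradient (f i) xstar)) xstar :=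
      HasFDerivAt.fun_sum (fun i _ => (hasGradientAt_iff_hasFDerivAt).mp (hg i xstar))
    exact hsum.const_mul _
  have hlocmin : IsLocalMin (fun w : EuclideanSpace ℝ (Fin d) => (N : ℝ)⁻¹ * ∑ i, f i w) xstar :=
    Filter.Eventually.of_forall (fun y => hstar y)
  have hzero := hlocmin.hasFDerivAt_eq_zero hsumF
  have hsumg : (∑ i, gradient (f i) xstar) = 0 := by
    have hN' : ((N : ℝ))⁻¹ ≠ 0 := inv_ne_zero (Nat.cast_ne_zero.mpr hN.ne')
    rcases smul_eq_zero.mp hzero with h | h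
    · exact absurd h hN'
    · have h1 : InnerProductSpace.toDual ℝ (EuclideanSpace ℝ (Fin d)) (∑ i, gradient (f i) xstar)
          = InnerProductSpace.toDual ℝ (EuclideanSpace ℝ (Fin d)) 0 := by
        rw [map_sum, map_zero]; exact h
      exact (InnerProductSpace.toDual ℝ (EuclideanSpace ℝ (Fin d))).injective h1
  have hinner0 : (∑ i, (inner ℝ (gradient (f i) xstar) (x - xstar) : ℝ)) = 0 := by
    rw [← sum_inner, hsumg, inner_zero_left]
  have coco : ∀ i, ‖gradient (f i) x - gradient (f i) xstar‖ ^ 2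
      ≤ 2 * L * (f i x - f i xstar - inner ℝ (gradient (f i) xstar) (x - xstar)) :=
    fun i => cocoercive hL (hconv i) (hg i) (hlip i) x xstar
  have hsumle : (∑ i, ‖gradient (f i) x - gradient (f i) xstar‖ ^ 2)
      ≤ ∑ i, 2 * L * (f i x - f i xstar - inner ℝ (gradient (f i) xstar) (x - xstar)) :=
    Finset.sum_le_sum (fun i _ => coco i)
  have hR : (∑ i, 2 * L * (f i x - f i xstar
        - (inner ℝ (gradient (f i) xstar) (x - xstar) : ℝ)))
      = 2 * L * ((∑ i, f i x) - ∑ i, f i xstar) := by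
    rw [← Finset.mul_sum]
    congr 1
    rw [Finset.sum_sub_distrib, Finset.sum_sub_distrib, hinner0]
    ring
  rw [hR] at hsumle
  have hNn : (0:ℝ) ≤ (N : ℝ)⁻¹ := by positivity
  have h := mul_le_mul_of_nonneg_left hsumle hNn
  calc (N : ℝ)⁻¹ * ∑ i, ‖gradient (f i) x - gradient (f i) xstar‖ ^ 2
      ≤ (N : ℝ)⁻¹ * (2 * L * ((∑ i, f i x) - ∑ i, f i xstar)) := h
    _ = 2 * L * ((N : ℝ)⁻¹ * ∑ i, f i x - (N : ℝ)⁻¹ * ∑ i, f i xstar) := by ring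
end
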